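/- Let ρ ∈ (0,1) and k > l ≥ 1 with ρ^{k+l} - 2ρ^l + 1 > 0. For the similarity φ_k(x) = ρ - ρ^k x and the interval I = [ρ(1 - ρ^l x_-), ρ x_-] with x_- = (1-ρ^k)/(1-ρ^{k+l}), one has φ_k(I) ⊆ I with sup φ_k(I) = sup I. -/

import Mathlib

theorem stmt11 (ρ : ℝ) (k l : ℕ) (hρ : ρ ∈ Set.Ioo (0 : ℝ) 1) (hl : 1 ≤ l) (hlk : l < k)
    (hcond : ρ ^ (k + l) - 2 * ρ ^ l + 1 > 0)
    (xm : ℝ) (hxm : xm = (1 - ρ ^ k) / (1 - ρ ^ (k + l)))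
    (I : Set ℝ) (hI : I = Set.Icc (ρ * (1 - ρ ^ l * xm)) (ρ * xm))
    (φk : ℝ → ℝ) (hφk : ∀ x, φk x = ρ - ρ ^ k * x) :
    φk '' I ⊆ I ∧ sSup (φk '' I) = sSup I := by
  obtain ⟨hρ0, hρ1⟩ := hρ
  have hkl : ρ ^ k < ρ ^ l := pow_lt_pow_right_of_lt_one₀ hρ0 hρ1 hlk
  have hkpos : (0:ℝ) < ρ ^ k := pow_pos hρ0 k
  have hlpos : (0:ℝ) < ρ ^ l := pow_pos hρ0 l
  have hklpos : (0:ℝ) < ρ ^ (k + l) := pow_pos hρ0 (k + l)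
  have hkl1 : ρ ^ (k + l) < 1 := pow_lt_one₀ hρ0.le hρ1 (by omega)
  have hk1 : ρ ^ k < 1 := pow_lt_one₀ hρ0.le hρ1 (by omega)
  have hden : (0:ℝ) < 1 - ρ ^ (k + l) := by linarith
  have hid : xm * (1 - ρ ^ (k + l)) = 1 - ρ ^ k := by
    rw [hxm]; field_simp
  have hxm0 : 0 < xm := by
    rw [hxm]; exact div_pos (by linarith) hden
  have hadd : ρ ^ (k + l) = ρ ^ k * ρ ^ l := pow_add ρ k l
  have key : (xm * (1 + ρ ^ l) - 1) * (1 - ρ ^ (k + l)) = ρ ^ l - ρ ^ k := by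
    linear_combination (1 + ρ ^ l) * hid + hadd
  have h1 : (1:ℝ) ≤ xm * (1 + ρ ^ l) := by nlinarith [key]
  have heq : ρ * (1 - ρ ^ k * (1 - ρ ^ l * xm)) = ρ * xm := by
    linear_combination -ρ * hid - ρ * xm * hadd
  have hab : ρ * (1 - ρ ^ l * xm) ≤ ρ * xm := by
    nlinarith [mul_le_mul_of_nonneg_left h1 hρ0.le]
  have hsub : φk '' I ⊆ I := by
    rintro y ⟨x, hx, rfl⟩
    rw [hI] at hx ⊢
    rw [hφk]
    constructor
    · nlinarith [mul_le_mul_of_nonneg_left hx.2 hkpos.le,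
        mul_le_mul_of_nonneg_right hkl.le (mul_pos hρ0 hxm0).le]
    · nlinarith [mul_le_mul_of_nonneg_left hx.1 hkpos.le, heq]
  refine ⟨hsub, ?_⟩
  have hIb : sSup I = ρ * xm := by rw [hI]; exact csSup_Icc hab
  have hmem : ρ * xm ∈ φk '' I := by
    refine ⟨ρ * (1 - ρ ^ l * xm), ?_, ?_⟩
    · rw [hI]; exact Set.left_mem_Icc.mpr hab
    · rw [hφk]; linarith [heq]
  have hbdd : BddAbove (φk '' I) := by
    refine BddAbove.mono hsub ?_
    rw [hI]; exact bddAbove_Icc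
  rw [hIb]
  refine le_antisymm ?_ (le_csSup hbdd hmem)
  refine csSup_le ⟨_, hmem⟩ fun y hy => ?_
  have := hsub hy
  rw [hI] at this
  exact this.2
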